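/- With the processes A_n := ∑_{i=n}^{N} ω_i ∏_{j=n+1}^{i} (1 - β_j ΔS_j) and D_n := ∑_{i=n}^{N} ω_i ∏_{j=n+1}^{i} (1 - β_j ΔS_j)^2, one has E[A_n | F_n] = E[D_n | F_n] ≤ N - n + 1 almost surely for every n ∈ {0,1,...,N}. -/

import Mathlib

open MeasureTheory Finset

lemma key_rec (g u : ℕ → ℝ) {n N : ℕ} (h : n < N) :
    ∑ i ∈ Finset.Icc n N, u i * ∏ j ∈ Finset.Icc (n+1) i, g j
      = u n + g (n+1) * ∑ i ∈ Finset.Icc (n+1) N, u i * ∏ j ∈ Finset.Icc (n+2) i, g j := by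
  rw [Finset.Icc_eq_cons_Ioc h.le, Finset.sum_cons, Finset.Icc_eq_empty (by omega),
    Finset.prod_empty, mul_one, Finset.mul_sum]
  congr 1
  rw [← Finset.Icc_add_one_left_eq_Ioc n N]
  refine Finset.sum_congr rfl fun i hi => ?_
  rw [Finset.Icc_eq_cons_Ioc (Finset.mem_Icc.mp hi).1, Finset.prod_cons,
    show Finset.Icc (n+2) i = Finset.Ioc (n+1) i from Finset.Icc_add_one_left_eq_Ioc (n+1) i]
  ring

/-- `A_n = ∑_{i=n}^N ω_i ∏_{j=n+1}^i (1 - β_j ΔS_j)`. -/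
def Aproc {Ω : Type*} (N : ℕ) (w β ΔS : ℕ → Ω → ℝ) (n : ℕ) (x : Ω) : ℝ :=
  ∑ i ∈ Finset.Icc n N, w i x * ∏ j ∈ Finset.Icc (n + 1) i, (1 - β j x * ΔS j x)

/-- `D_n = ∑_{i=n}^N ω_i ∏_{j=n+1}^i (1 - β_j ΔS_j)²`. -/
def Dproc {Ω : Type*} (N : ℕ) (w β ΔS : ℕ → Ω → ℝ) (n : ℕ) (x : Ω) : ℝ :=
  ∑ i ∈ Finset.Icc n N, w i x * ∏ j ∈ Finset.Icc (n + 1) i, (1 - β j x * ΔS j x) ^ 2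

lemma Aproc_rec {Ω : Type*} (N : ℕ) (w β ΔS : ℕ → Ω → ℝ) {n : ℕ} (h : n < N) :
    Aproc N w β ΔS n
      = fun x => w n x + (1 - β (n+1) x * ΔS (n+1) x) * Aproc N w β ΔS (n+1) x := by
  funext x
  exact key_rec (fun j => 1 - β j x * ΔS j x) (fun i => w i x) h

lemma Dproc_rec {Ω : Type*} (N : ℕ) (w β ΔS : ℕ → Ω → ℝ) {n : ℕ} (h : n < N) :
    Dproc N w β ΔS n
      = fun x => w n x + (1 - β (n+1) x * ΔS (n+1) x) ^ 2 * Dproc N w β ΔS (n+1) x := by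
  funext x
  exact key_rec (fun j => (1 - β j x * ΔS j x) ^ 2) (fun i => w i x) h

lemma Dproc_nonneg {Ω : Type*} (N : ℕ) (w β ΔS : ℕ → Ω → ℝ) (n : ℕ) (x : Ω)
    (hw : ∀ n x, w n x ∈ Set.Icc (0 : ℝ) 1) : 0 ≤ Dproc N w β ΔS n x :=
  Finset.sum_nonneg fun i _ => mul_nonneg (hw i x).1
    (Finset.prod_nonneg fun j _ => sq_nonneg _)

theorem stmt_3 {Ω : Type*} {m0 : MeasurableSpace Ω} (μ : Measure Ω) [IsProbabilityMeasure μ]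
    (N : ℕ) (ℱ : Filtration ℕ m0) (ΔS w : ℕ → Ω → ℝ) (αp δp β : ℕ → Ω → ℝ)
    (hw : ∀ n x, w n x ∈ Set.Icc (0 : ℝ) 1)
    (hwa : ∀ n, StronglyMeasurable[ℱ n] (w n))
    (hSa : ∀ n, StronglyMeasurable[ℱ n] (ΔS n))
    (hSloc : ∀ n, Integrable (fun x => ΔS n x ^ 2) μ)
    (hβ : ∀ n x, β n x = αp n x / δp n x)
    (hβ0 : ∀ x, β 0 x = 0)
    (hα : ∀ n ∈ Finset.Icc 1 N,
      αp n =ᵐ[μ] μ[fun x => ΔS n x * Aproc N w β ΔS n x | ℱ (n - 1)])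
    (hδ : ∀ n ∈ Finset.Icc 1 N,
      δp n =ᵐ[μ] μ[fun x => ΔS n x ^ 2 * Dproc N w β ΔS n x | ℱ (n - 1)])
    (hAint : ∀ n, Integrable (Aproc N w β ΔS n) μ)
    (hDint : ∀ n, Integrable (Dproc N w β ΔS n) μ)
    (hSAint : ∀ n, Integrable (fun x => ΔS n x * Aproc N w β ΔS n x) μ)
    (hSDint : ∀ n, Integrable (fun x => ΔS n x ^ 2 * Dproc N w β ΔS n x) μ) :
    ∀ n ≤ N,
      μ[Aproc N w β ΔS n | ℱ n] =ᵐ[μ] μ[Dproc N w β ΔS n | ℱ n] ∧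
      ∀ᵐ x ∂μ, (μ[Aproc N w β ΔS n | ℱ n]) x ≤ (N : ℝ) - n + 1 := by
  set A := Aproc N w β ΔS with hA
  set D := Dproc N w β ΔS with hD
  have hwint : ∀ k, Integrable (w k) μ := fun k =>
    (integrable_const (1 : ℝ)).mono' ((hwa k).mono (ℱ.le k)).aestronglyMeasurable
      (Filter.Eventually.of_forall fun x => by
        have h1 := (hw k x).1; have h2 := (hw k x).2
        rw [Real.norm_eq_abs, abs_of_nonneg h1]; exact h2)
  have hSint : ∀ k, Integrable (ΔS k) μ := fun k =>
    ((hSloc k).add (integrable_const 1)).mono'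
      ((hSa k).mono (ℱ.le k)).aestronglyMeasurable
      (Filter.Eventually.of_forall fun x => by
        rw [Real.norm_eq_abs]
        simp only [Pi.add_apply]
        nlinarith [sq_nonneg (|ΔS k x| - 1), sq_abs (ΔS k x)])
  suffices H : ∀ k n, n + k = N →
      (μ[A n | ℱ n] =ᵐ[μ] μ[D n | ℱ n] ∧
        ∀ᵐ x ∂μ, (μ[A n | ℱ n]) x ≤ (N : ℝ) - n + 1) by
    intro n hn; exact H (N - n) n (by omega)
  intro k
  induction k with
  | zero =>
    intro n hn
    have hnN : n = N := by omega
    subst hnN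
    have hAN : A n = w n := by
      funext x; rw [hA]; unfold Aproc
      rw [Finset.Icc_self, Finset.sum_singleton, Finset.Icc_eq_empty (by omega),
        Finset.prod_empty, mul_one]
    have hDN : D n = w n := by
      funext x; rw [hD]; unfold Dproc
      rw [Finset.Icc_self, Finset.sum_singleton, Finset.Icc_eq_empty (by omega),
        Finset.prod_empty, mul_one]
    constructor
    · rw [hAN, hDN]
    · rw [hAN, condExp_of_stronglyMeasurable (ℱ.le n) (hwa n) (hwint n)]
      exact Filter.Eventually.of_forall fun x => by
        have := (hw n x).2; linarith
  | succ k ih =>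
    intro n hn
    have hnN : n < N := by omega
    obtain ⟨IH1, IH2⟩ := ih (n+1) (by omega)
    have hle : ℱ n ≤ ℱ (n+1) := ℱ.mono (Nat.le_succ n)
    -- the predictable versions of α, δ, β
    set a : Ω → ℝ := μ[fun x => ΔS (n+1) x * A (n+1) x | ℱ n] with ha
    set d : Ω → ℝ := μ[fun x => ΔS (n+1) x ^ 2 * D (n+1) x | ℱ n] with hd
    set b : Ω → ℝ := fun x => a x / d x with hb
    have hαn : αp (n+1) =ᵐ[μ] a := by
      have := hα (n+1) (Finset.mem_Icc.mpr ⟨by omega, by omega⟩)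
      simpa using this
    have hδn : δp (n+1) =ᵐ[μ] d := by
      have := hδ (n+1) (Finset.mem_Icc.mpr ⟨by omega, by omega⟩)
      simpa using this
    have hβb : β (n+1) =ᵐ[μ] b := by
      filter_upwards [hαn, hδn] with x h1 h2
      rw [hβ (n+1) x, h1, h2]
    have hb_sm : StronglyMeasurable[ℱ n] b :=
      (stronglyMeasurable_condExp.measurable.div
        stronglyMeasurable_condExp.measurable).stronglyMeasurable
    have hb_sm' : StronglyMeasurable[ℱ (n+1)] b := hb_sm.mono hle
    set Z : Ω → ℝ := μ[A (n+1) | ℱ (n+1)] with hZ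
    set ZD : Ω → ℝ := μ[D (n+1) | ℱ (n+1)] with hZD
    have hZ_sm : StronglyMeasurable[ℱ (n+1)] Z := stronglyMeasurable_condExp
    have hZub : ∀ᵐ x ∂μ, Z x ≤ (N : ℝ) - n := by
      filter_upwards [IH2] with x hx
      push_cast at hx ⊢; linarith
    have hZnn : ∀ᵐ x ∂μ, 0 ≤ Z x := by
      filter_upwards [IH1, condExp_nonneg (μ := μ) (m := ℱ (n+1))
        (f := D (n+1)) (Filter.Eventually.of_forall fun x => Dproc_nonneg N w β ΔS (n+1) x hw)]
        with x h1 h2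
      rw [h1]; exact h2
    -- K with the b version
    set K : Ω → ℝ := fun x => 1 - b x * ΔS (n+1) x with hK
    have hK_sm : StronglyMeasurable[ℱ (n+1)] K :=
      stronglyMeasurable_const.sub (hb_sm'.mul (hSa (n+1)))
    have hK2_sm : StronglyMeasurable[ℱ (n+1)] (fun x => K x ^ 2) := hK_sm.pow 2
    -- integrability of the β-version products via the recursions
    have hKAβ_int : Integrable (fun x => (1 - β (n+1) x * ΔS (n+1) x) * A (n+1) x) μ := by
      have : (fun x => (1 - β (n+1) x * ΔS (n+1) x) * A (n+1) x)
          = fun x => A n x - w n x := by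
        funext x
        rw [hA, Aproc_rec N w β ΔS hnN]; ring
      rw [this]; exact (hAint n).sub (hwint n)
    have hKDβ_int : Integrable (fun x => (1 - β (n+1) x * ΔS (n+1) x) ^ 2 * D (n+1) x) μ := by
      have : (fun x => (1 - β (n+1) x * ΔS (n+1) x) ^ 2 * D (n+1) x)
          = fun x => D n x - w n x := by
        funext x
        rw [hD, Dproc_rec N w β ΔS hnN]; ring
      rw [this]; exact (hDint n).sub (hwint n)
    have hKAae : (fun x => (1 - β (n+1) x * ΔS (n+1) x) * A (n+1) x)
        =ᵐ[μ] fun x => K x * A (n+1) x := by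
      filter_upwards [hβb] with x hx; rw [hK]; simp only []; rw [hx]
    have hKDae : (fun x => (1 - β (n+1) x * ΔS (n+1) x) ^ 2 * D (n+1) x)
        =ᵐ[μ] fun x => K x ^ 2 * D (n+1) x := by
      filter_upwards [hβb] with x hx; rw [hK]; simp only []; rw [hx]
    have hKA_int : Integrable (fun x => K x * A (n+1) x) μ := hKAβ_int.congr hKAae
    have hKD_int : Integrable (fun x => K x ^ 2 * D (n+1) x) μ := hKDβ_int.congr hKDae
    -- pull-out at level n+1
    have epullA : μ[fun x => K x * A (n+1) x | ℱ (n+1)] =ᵐ[μ] fun x => K x * Z x :=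
      condExp_mul_of_stronglyMeasurable_left hK_sm hKA_int (hAint (n+1))
    have epullD : μ[fun x => K x ^ 2 * D (n+1) x | ℱ (n+1)] =ᵐ[μ] fun x => K x ^ 2 * ZD x :=
      condExp_mul_of_stronglyMeasurable_left hK2_sm hKD_int (hDint (n+1))
    have hKZ_int : Integrable (fun x => K x * Z x) μ :=
      integrable_condExp.congr epullA
    have hK2ZD_int : Integrable (fun x => K x ^ 2 * ZD x) μ :=
      integrable_condExp.congr epullD
    -- a = E[ΔS Z | F n],  d = E[ΔS² ZD | F n]
    have eSZ : (fun x => ΔS (n+1) x * Z x) =ᵐ[μ] μ[fun x => ΔS (n+1) x * A (n+1) x | ℱ (n+1)] :=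
      (condExp_mul_of_stronglyMeasurable_left (hSa (n+1)) (hSAint (n+1)) (hAint (n+1))).symm
    have eSZD : (fun x => ΔS (n+1) x ^ 2 * ZD x)
        =ᵐ[μ] μ[fun x => ΔS (n+1) x ^ 2 * D (n+1) x | ℱ (n+1)] :=
      (condExp_mul_of_stronglyMeasurable_left ((hSa (n+1)).pow 2) (hSDint (n+1)) (hDint (n+1))).symm
    have hSZ_int : Integrable (fun x => ΔS (n+1) x * Z x) μ :=
      integrable_condExp.congr eSZ.symm
    have hSZD_int : Integrable (fun x => ΔS (n+1) x ^ 2 * ZD x) μ :=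
      integrable_condExp.congr eSZD.symm
    have eaZ : μ[fun x => ΔS (n+1) x * Z x | ℱ n] =ᵐ[μ] a := by
      calc μ[fun x => ΔS (n+1) x * Z x | ℱ n]
          =ᵐ[μ] μ[μ[fun x => ΔS (n+1) x * A (n+1) x | ℱ (n+1)] | ℱ n] := condExp_congr_ae eSZ
        _ =ᵐ[μ] a := condExp_condExp_of_le hle (ℱ.le (n+1))
    have edZ : μ[fun x => ΔS (n+1) x ^ 2 * ZD x | ℱ n] =ᵐ[μ] d := by
      calc μ[fun x => ΔS (n+1) x ^ 2 * ZD x | ℱ n]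
          =ᵐ[μ] μ[μ[fun x => ΔS (n+1) x ^ 2 * D (n+1) x | ℱ (n+1)] | ℱ n] :=
            condExp_congr_ae eSZD
        _ =ᵐ[μ] d := condExp_condExp_of_le hle (ℱ.le (n+1))
    -- further integrability
    have hbSZ_int : Integrable (fun x => b x * (ΔS (n+1) x * Z x)) μ := by
      have : (fun x => Z x - K x * Z x) =ᵐ[μ] fun x => b x * (ΔS (n+1) x * Z x) :=
        Filter.Eventually.of_forall fun x => by rw [hK]; ring
      exact (integrable_condExp.sub hKZ_int).congr this
    have hSZD_int' : Integrable (fun x => ΔS (n+1) x ^ 2 * Z x) μ :=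
      hSZD_int.congr (by filter_upwards [IH1] with x hx; rw [← hx])
    have hbSZD_int : Integrable (fun x => b x * (ΔS (n+1) x * Z x)) μ := hbSZ_int
    have hb2SZD_int : Integrable (fun x => b x ^ 2 * (ΔS (n+1) x ^ 2 * ZD x)) μ := by
      have e1 : (fun x => K x ^ 2 * ZD x - ZD x + 2 * (b x * (ΔS (n+1) x * ZD x)))
          =ᵐ[μ] fun x => b x ^ 2 * (ΔS (n+1) x ^ 2 * ZD x) :=
        Filter.Eventually.of_forall fun x => by rw [hK]; ring
      have hbSZD2 : Integrable (fun x => b x * (ΔS (n+1) x * ZD x)) μ :=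
        hbSZ_int.congr (by filter_upwards [IH1] with x hx; rw [hx])
      exact ((hK2ZD_int.sub integrable_condExp).add (hbSZD2.const_mul 2)).congr e1
    have hbSZD2 : Integrable (fun x => b x * (ΔS (n+1) x * ZD x)) μ :=
      hbSZ_int.congr (by filter_upwards [IH1] with x hx; rw [hx])
    have hSZDl_int : Integrable (fun x => ΔS (n+1) x * ZD x) μ :=
      hSZ_int.congr (by filter_upwards [IH1] with x hx; rw [hx])
    -- pull b out at level n
    have ebA : μ[fun x => b x * (ΔS (n+1) x * Z x) | ℱ n]
        =ᵐ[μ] fun x => b x * a x := by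
      have h1 : μ[fun x => b x * (ΔS (n+1) x * Z x) | ℱ n]
          =ᵐ[μ] fun x => b x * (μ[fun x => ΔS (n+1) x * Z x | ℱ n]) x :=
        condExp_mul_of_stronglyMeasurable_left hb_sm hbSZ_int hSZ_int
      filter_upwards [h1, eaZ] with x h1x h2x
      rw [h1x, h2x]
    have ebD : μ[fun x => b x * (ΔS (n+1) x * ZD x) | ℱ n]
        =ᵐ[μ] fun x => b x * a x := by
      have h1 : μ[fun x => b x * (ΔS (n+1) x * ZD x) | ℱ n]
          =ᵐ[μ] fun x => b x * (μ[fun x => ΔS (n+1) x * ZD x | ℱ n]) x :=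
        condExp_mul_of_stronglyMeasurable_left hb_sm hbSZD2 hSZDl_int
      have h2 : μ[fun x => ΔS (n+1) x * ZD x | ℱ n] =ᵐ[μ] a := by
        refine (condExp_congr_ae ?_).trans eaZ
        filter_upwards [IH1] with x hx; rw [hx]
      filter_upwards [h1, h2] with x h1x h2x
      rw [h1x, h2x]
    have eb2D : μ[fun x => b x ^ 2 * (ΔS (n+1) x ^ 2 * ZD x) | ℱ n]
        =ᵐ[μ] fun x => b x ^ 2 * d x := by
      have h1 : μ[fun x => b x ^ 2 * (ΔS (n+1) x ^ 2 * ZD x) | ℱ n]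
          =ᵐ[μ] fun x => b x ^ 2 * (μ[fun x => ΔS (n+1) x ^ 2 * ZD x | ℱ n]) x :=
        condExp_mul_of_stronglyMeasurable_left (hb_sm.pow 2) hb2SZD_int hSZD_int
      filter_upwards [h1, edZ] with x h1x h2x
      rw [h1x, h2x]
    -- WZ := E[Z | F n]
    set WZ : Ω → ℝ := μ[Z | ℱ n] with hWZ
    -- main identity for A
    have eA : μ[A n | ℱ n] =ᵐ[μ] fun x => w n x + (WZ x - b x * a x) := by
      have e0 : A n =ᵐ[μ] fun x => w n x + K x * A (n+1) x := by
        filter_upwards [hβb] with x hx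
        rw [hA, Aproc_rec N w β ΔS hnN]; simp only []; rw [hK]; simp only []; rw [hx]
      calc μ[A n | ℱ n]
          =ᵐ[μ] μ[(w n) + fun x => K x * A (n+1) x | ℱ n] := condExp_congr_ae e0
        _ =ᵐ[μ] μ[w n | ℱ n] + μ[fun x => K x * A (n+1) x | ℱ n] :=
            condExp_add (hwint n) hKA_int _
        _ =ᵐ[μ] fun x => w n x + (WZ x - b x * a x) := by
            have ew : μ[w n | ℱ n] = w n :=
              condExp_of_stronglyMeasurable (ℱ.le n) (hwa n) (hwint n)
            have e1 : μ[fun x => K x * A (n+1) x | ℱ n]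
                =ᵐ[μ] μ[fun x => K x * Z x | ℱ n] := by
              calc μ[fun x => K x * A (n+1) x | ℱ n]
                  =ᵐ[μ] μ[μ[fun x => K x * A (n+1) x | ℱ (n+1)] | ℱ n] :=
                    (condExp_condExp_of_le hle (ℱ.le (n+1))).symm
                _ =ᵐ[μ] μ[fun x => K x * Z x | ℱ n] := condExp_congr_ae epullA
            have e2 : (fun x => K x * Z x) =ᵐ[μ]
                fun x => Z x - b x * (ΔS (n+1) x * Z x) :=
              Filter.Eventually.of_forall fun x => by rw [hK]; ring
            have e3 : μ[fun x => Z x - b x * (ΔS (n+1) x * Z x) | ℱ n]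
                =ᵐ[μ] μ[Z | ℱ n] - μ[fun x => b x * (ΔS (n+1) x * Z x) | ℱ n] :=
              condExp_sub integrable_condExp hbSZ_int _
            filter_upwards [e1.trans ((condExp_congr_ae e2).trans e3), ebA] with x h1x h2x
            rw [ew]
            simp only [Pi.add_apply, Pi.sub_apply] at h1x ⊢
            rw [h1x, h2x]
    -- main identity for D
    have eD : μ[D n | ℱ n] =ᵐ[μ]
        fun x => w n x + (WZ x - 2 * (b x * a x) + b x ^ 2 * d x) := by
      have e0 : D n =ᵐ[μ] fun x => w n x + K x ^ 2 * D (n+1) x := by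
        filter_upwards [hβb] with x hx
        rw [hD, Dproc_rec N w β ΔS hnN]; simp only []; rw [hK]; simp only []; rw [hx]
      calc μ[D n | ℱ n]
          =ᵐ[μ] μ[(w n) + fun x => K x ^ 2 * D (n+1) x | ℱ n] := condExp_congr_ae e0
        _ =ᵐ[μ] μ[w n | ℱ n] + μ[fun x => K x ^ 2 * D (n+1) x | ℱ n] :=
            condExp_add (hwint n) hKD_int _
        _ =ᵐ[μ] fun x => w n x + (WZ x - 2 * (b x * a x) + b x ^ 2 * d x) := by
            have ew : μ[w n | ℱ n] = w n :=
              condExp_of_stronglyMeasurable (ℱ.le n) (hwa n) (hwint n)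
            have e1 : μ[fun x => K x ^ 2 * D (n+1) x | ℱ n]
                =ᵐ[μ] μ[fun x => K x ^ 2 * ZD x | ℱ n] := by
              calc μ[fun x => K x ^ 2 * D (n+1) x | ℱ n]
                  =ᵐ[μ] μ[μ[fun x => K x ^ 2 * D (n+1) x | ℱ (n+1)] | ℱ n] :=
                    (condExp_condExp_of_le hle (ℱ.le (n+1))).symm
                _ =ᵐ[μ] μ[fun x => K x ^ 2 * ZD x | ℱ n] := condExp_congr_ae epullD
            have e2 : (fun x => K x ^ 2 * ZD x) =ᵐ[μ]
                fun x => (ZD x - 2 * (b x * (ΔS (n+1) x * ZD x)))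
                  + b x ^ 2 * (ΔS (n+1) x ^ 2 * ZD x) :=
              Filter.Eventually.of_forall fun x => by rw [hK]; ring
            have hf1 : Integrable (fun x => ZD x - 2 * (b x * (ΔS (n+1) x * ZD x))) μ :=
              integrable_condExp.sub (hbSZD2.const_mul 2)
            have e3 : μ[fun x => (ZD x - 2 * (b x * (ΔS (n+1) x * ZD x)))
                  + b x ^ 2 * (ΔS (n+1) x ^ 2 * ZD x) | ℱ n]
                =ᵐ[μ] μ[fun x => ZD x - 2 * (b x * (ΔS (n+1) x * ZD x)) | ℱ n]
                  + μ[fun x => b x ^ 2 * (ΔS (n+1) x ^ 2 * ZD x) | ℱ n] :=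
              condExp_add hf1 hb2SZD_int _
            have e4 : μ[fun x => ZD x - 2 * (b x * (ΔS (n+1) x * ZD x)) | ℱ n]
                =ᵐ[μ] μ[ZD | ℱ n] - μ[fun x => 2 * (b x * (ΔS (n+1) x * ZD x)) | ℱ n] :=
              condExp_sub integrable_condExp (hbSZD2.const_mul 2) _
            have e5 : μ[fun x => 2 * (b x * (ΔS (n+1) x * ZD x)) | ℱ n]
                =ᵐ[μ] fun x => 2 * (b x * a x) := by
              have := (condExp_smul (μ := μ) (m := ℱ n) (2 : ℝ)
                (fun x => b x * (ΔS (n+1) x * ZD x)))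
              refine this.trans ?_
              filter_upwards [ebD] with x hx
              simp only [Pi.smul_apply, smul_eq_mul]
              rw [hx]
            have e6 : μ[ZD | ℱ n] =ᵐ[μ] WZ := by
              refine condExp_congr_ae ?_
              filter_upwards [IH1] with x hx; rw [hx]
            filter_upwards [e1.trans ((condExp_congr_ae e2).trans e3), e4, e5, e6, eb2D]
              with x h1x h4x h5x h6x h7x
            rw [ew]
            simp only [Pi.add_apply, Pi.sub_apply] at h1x h4x ⊢
            rw [h1x, h4x, h5x, h6x, h7x]
    -- nonnegativity of d
    have hdnn : ∀ᵐ x ∂μ, 0 ≤ d x := by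
      rw [hd]
      exact condExp_nonneg (Filter.Eventually.of_forall fun x =>
        mul_nonneg (sq_nonneg _) (Dproc_nonneg N w β ΔS (n+1) x hw))
    -- bound for WZ
    have hWZub : ∀ᵐ x ∂μ, WZ x ≤ (N : ℝ) - n := by
      have h1 : WZ ≤ᵐ[μ] μ[fun _ => (N : ℝ) - n | ℱ n] :=
        condExp_mono integrable_condExp (integrable_const _) hZub
      have h2 : μ[fun _ => (N : ℝ) - n | ℱ n] = fun _ => (N : ℝ) - n :=
        condExp_const (ℱ.le n) _
      filter_upwards [h1] with x hx
      rw [h2] at hx; exact hx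
    constructor
    · refine eA.trans (Filter.EventuallyEq.trans ?_ eD.symm)
      refine Filter.Eventually.of_forall fun x => ?_
      simp only []
      rcases eq_or_ne (d x) 0 with h | h
      · rw [hb]; simp only []; rw [h]; simp
      · have : b x = a x / d x := rfl
        rw [this]; field_simp; ring
    · filter_upwards [eA, hWZub, hdnn] with x h1 h2 h3
      rw [h1]
      have hba : 0 ≤ b x * a x := by
        have : b x * a x = a x ^ 2 / d x := by rw [hb]; simp only []; ring
        rw [this]; exact div_nonneg (sq_nonneg _) h3
      have := (hw n x).2
      push_cast
      linarith
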